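/- Let 𝒟 be a compact convex subset of ℝⁿ contained in the interior of the convex hull 𝒱 of points v₁,…,v_{n+1}. Then there exists ε > 0 such that for any points v₁',…,v_{n+1}' with ‖v_i - v_i'‖ < ε for all i, 𝒟 is contained in the convex hull of v₁',…,v_{n+1}'. -/

import Mathlib

/-- Lemma 6.4 (second part): if a compact convex set `𝒟 ⊆ ℝⁿ` lies in the interior of the
convex hull of `v₁,…,v_{n+1}`, then there is `ε > 0` such that `𝒟` lies in the convex hull
of any points `v'` with `‖v_i - v'_i‖ < ε` for all `i`. -/
theorem stmt_5 (n : ℕ) (D : Set (EuclideanSpace ℝ (Fin n)))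
    (hD : IsCompact D) (hconv : Convex ℝ D)
    (v : Fin (n + 1) → EuclideanSpace ℝ (Fin n))
    (hv : D ⊆ interior (convexHull ℝ (Set.range v))) :
    ∃ ε : ℝ, 0 < ε ∧ ∀ v' : Fin (n + 1) → EuclideanSpace ℝ (Fin n),
      (∀ i, ‖v i - v' i‖ < ε) → D ⊆ convexHull ℝ (Set.range v') := by
  obtain ⟨δ, hδ, hthick⟩ := hD.exists_thickening_subset_open isOpen_interior hv
  refine ⟨δ / 2, by linarith, fun v' hv' x hx => ?_⟩
  by_contra hxn
  have hclosed : IsClosed (convexHull ℝ (Set.range v')) :=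
    (Set.finite_range v').isClosed_convexHull (𝕜 := ℝ)
  obtain ⟨f, c, hfc, hcx⟩ :=
    geometric_hahn_banach_closed_point (convex_convexHull ℝ _) hclosed hxn
  -- f is nonzero
  have hf0 : f ≠ 0 := by
    intro h
    have h1 := hfc (v' 0) (subset_convexHull ℝ _ ⟨0, rfl⟩)
    rw [h] at h1 hcx
    simp at h1 hcx
    linarith
  set u := (InnerProductSpace.toDual ℝ (EuclideanSpace ℝ (Fin n))).symm f with hu
  have hunorm : ‖u‖ = ‖f‖ := (InnerProductSpace.toDual ℝ _).symm.norm_map f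
  have hfpos : 0 < ‖f‖ := norm_pos_iff.2 hf0
  have hupos : 0 < ‖u‖ := hunorm ▸ hfpos
  set y := x + (δ / 2 / ‖u‖) • u with hy
  have hyx : ‖y - x‖ = δ / 2 := by
    rw [hy]
    simp only [add_sub_cancel_left, norm_smul]
    rw [Real.norm_eq_abs, abs_of_pos (div_pos (by linarith : (0:ℝ) < δ/2) hupos)]
    field_simp
  have hymem : y ∈ Metric.thickening δ D :=
    Metric.mem_thickening_iff.2 ⟨x, hx, by rw [dist_eq_norm, hyx]; linarith⟩
  have hyhull : y ∈ convexHull ℝ (Set.range v) :=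
    interior_subset (hthick hymem)
  -- hull v ⊆ {z | f z < c + ‖f‖ * (δ/2)}
  have hsub : convexHull ℝ (Set.range v) ⊆ {z | f z < c + ‖f‖ * (δ / 2)} := by
    apply convexHull_min
    · rintro _ ⟨i, rfl⟩
      have h1 : f (v i) - f (v' i) ≤ ‖f‖ * ‖v i - v' i‖ := by
        calc f (v i) - f (v' i) = f (v i - v' i) := by rw [map_sub]
        _ ≤ ‖f (v i - v' i)‖ := le_abs_self _
        _ ≤ ‖f‖ * ‖v i - v' i‖ := f.le_opNorm _
      have h2 : ‖f‖ * ‖v i - v' i‖ < ‖f‖ * (δ / 2) :=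
        mul_lt_mul_of_pos_left (hv' i) hfpos
      have h3 := hfc (v' i) (subset_convexHull ℝ _ ⟨i, rfl⟩)
      simp only [Set.mem_setOf_eq]
      linarith
    · exact convex_halfSpace_lt ⟨map_add f, map_smul f⟩ _
  have hfy := hsub hyhull
  have hfy2 : f y = f x + ‖f‖ * (δ / 2) := by
    rw [hy, map_add, map_smul]
    have : f u = ‖f‖ ^ 2 := by
      rw [hu]
      have := @InnerProductSpace.toDual_symm_apply ℝ _ _ _ _ _
        ((InnerProductSpace.toDual ℝ (EuclideanSpace ℝ (Fin n))).symm f) f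
      rw [real_inner_self_eq_norm_sq, hunorm] at this
      rw [← this]
    rw [this, smul_eq_mul, hunorm]
    field_simp
  simp only [Set.mem_setOf_eq] at hfy
  rw [hfy2] at hfy
  have : 0 < ‖f‖ * (δ / 2) := mul_pos hfpos (by linarith)
  linarith
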